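/- arXiv:0909.0216 — 8 statements merged into one kernel-verified Lean document; each statement's English description precedes it below -/
import Mathlib

section
/- Let Φ : ℝ → ℝ be differentiable, and let r_L, v_L, r_R, v_R, c be real numbers with r_L ≠ r_R. If the three jump conditions c(r_L − r_R) + (v_L − v_R) = 0, c(v_L − v_R) + (Φ'(r_L) − Φ'(r_R)) = 0, and c(½v_L² + Φ(r_L) − ½v_R² − Φ(r_R)) + (v_L Φ'(r_L) − v_R Φ'(r_R)) = 0 all hold, and c ≠ 0, then J(r_L, r_R) = 0. -/
/-- Conservative-shock function `J(a,b) = Φ(a) − Φ(b) − ((a−b)/2)·(Φ'(a) + Φ'(b))`. -/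
noncomputable def consJ (Φ : ℝ → ℝ) (a b : ℝ) : ℝ :=
  Φ a - Φ b - ((a - b) / 2) * (deriv Φ a + deriv Φ b)

theorem stmt0 (Φ : ℝ → ℝ) (hΦ : Differentiable ℝ Φ)
    (rL vL rR vR c : ℝ) (hr : rL ≠ rR)
    (hmass : c * (rL - rR) + (vL - vR) = 0)
    (hmom : c * (vL - vR) + (deriv Φ rL - deriv Φ rR) = 0)
    (hen : c * ((1 / 2) * vL ^ 2 + Φ rL - (1 / 2) * vR ^ 2 - Φ rR)
        + (vL * deriv Φ rL - vR * deriv Φ rR) = 0)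
    (hc : c ≠ 0) :
    consJ Φ rL rR = 0 := by
  have key : c * consJ Φ rL rR = 0 := by
    unfold consJ
    linear_combination hen - ((vL + vR) / 2) * hmom
      - ((deriv Φ rL + deriv Φ rR) / 2) * hmass
  exact (mul_eq_zero.mp key).resolve_left hc
end

section
/- Let Φ : ℝ → ℝ be three times continuously differentiable and let r_L ≠ r_R be real numbers such that Φ''(r) > 0 for all r in the closed interval between r_R and r_L and Φ'''(r) ≠ 0 for all r in the open interval between r_R and r_L. If real numbers v_L, v_R, c satisfy the Rankine–Hugoniot jump conditions for mass and momentum, c(r_L − r_R) + (v_L − v_R) = 0 and c(v_L − v_R) + (Φ'(r_L) − Φ'(r_R)) = 0, then the jump condition for the energy is violated: c(½v_L² + Φ(r_L) − ½v_R² − Φ(r_R)) + (v_L Φ'(r_L) − v_R Φ'(r_R)) ≠ 0. -/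
private lemma sign_dichotomy {f : ℝ → ℝ} (hf : Continuous f) (a b : ℝ)
    (h : ∀ x ∈ Set.Ioo a b, f x ≠ 0) :
    (∀ x ∈ Set.Ioo a b, 0 < f x) ∨ (∀ x ∈ Set.Ioo a b, f x < 0) := by
  by_contra hc
  push_neg at hc
  obtain ⟨⟨x, hx, hfx⟩, ⟨y, hy, hfy⟩⟩ := hc
  have hfx' : f x < 0 := lt_of_le_of_ne hfx (h x hx)
  have hfy' : 0 < f y := lt_of_le_of_ne hfy (Ne.symm (h y hy))
  have hsub : Set.uIcc x y ⊆ Set.Ioo a b := (Set.ordConnected_Ioo).uIcc_subset hx hy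
  have := intermediate_value_uIcc (f := f) (a := x) (b := y) hf.continuousOn
  have h0 : (0:ℝ) ∈ Set.uIcc (f x) (f y) := by
    rw [Set.mem_uIcc]; left; exact ⟨hfx'.le, hfy'.le⟩
  obtain ⟨z, hz, hz0⟩ := this h0
  exact h z (hsub hz) hz0

private lemma trap (Φ : ℝ → ℝ) (hΦ : ContDiff ℝ 3 Φ) (a b : ℝ) (hab : a < b)
    (h3 : ∀ x ∈ Set.Ioo a b, deriv (deriv (deriv Φ)) x ≠ 0) :
    Φ b - Φ a - (b - a) / 2 * (deriv Φ b + deriv Φ a) ≠ 0 := by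
  set φ1 := deriv Φ with hφ1
  set φ2 := deriv φ1 with hφ2
  set φ3 := deriv φ2 with hφ3
  have hΦ' : ContDiff ℝ ((2:ℕ)+1) Φ := by exact_mod_cast hΦ
  have h1c : ContDiff ℝ 2 φ1 := by exact_mod_cast (contDiff_succ_iff_deriv.mp hΦ').2.2
  have h1c' : ContDiff ℝ ((1:ℕ)+1) φ1 := by exact_mod_cast h1c
  have h2c : ContDiff ℝ 1 φ2 := by exact_mod_cast (contDiff_succ_iff_deriv.mp h1c').2.2
  have hdΦ : Differentiable ℝ Φ := hΦ.differentiable (by norm_num)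
  have hd1 : Differentiable ℝ φ1 := h1c.differentiable (by norm_num)
  have hd2 : Differentiable ℝ φ2 := h2c.differentiable (by norm_num)
  have hc3 : Continuous φ3 := h2c.continuous_deriv le_rfl
  -- auxiliary functions
  set h : ℝ → ℝ := fun x => (φ1 x - φ1 a) - (x - a) * φ2 x with hh
  set g : ℝ → ℝ := fun x => Φ x - Φ a - (x - a) / 2 * (φ1 x + φ1 a) with hg
  have hdh : ∀ x, HasDerivAt h (-(x - a) * φ3 x) x := by
    intro x
    have H : HasDerivAt h (φ2 x - (1 * φ2 x + (x - a) * φ3 x)) x := by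
      exact ((hd1 x).hasDerivAt.sub_const (φ1 a)).sub
        (((hasDerivAt_id x).sub_const a).mul (hd2 x).hasDerivAt)
    convert H using 1; ring
  have hdg : ∀ x, HasDerivAt g (h x / 2) x := by
    intro x
    have H : HasDerivAt g (deriv Φ x - ((1 / 2) * (φ1 x + φ1 a) + (x - a) / 2 * φ2 x)) x := by
      refine ((hdΦ x).hasDerivAt.sub_const (Φ a)).sub ?_
      have h1 : HasDerivAt (fun x => (x - a) / 2) (1 / 2) x := by
        simpa using ((hasDerivAt_id x).sub_const a).div_const 2
      exact h1.mul ((hd1 x).hasDerivAt.add_const (φ1 a))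
    convert H using 1; simp only [hh, hφ1]; ring
  have hgcont : Continuous g := by
    apply Continuous.sub
    · exact (hΦ.continuous).sub continuous_const
    · exact (((continuous_id.sub continuous_const).div_const 2)).mul
        ((h1c.continuous).add continuous_const)
  have hhcont : Continuous h := by
    apply Continuous.sub
    · exact (h1c.continuous).sub continuous_const
    · exact ((continuous_id.sub continuous_const)).mul (h2c.continuous)
  have hga : g a = 0 := by simp [hg]
  have hha : h a = 0 := by simp [hh]
  -- sign dichotomy for φ3
  rcases sign_dichotomy hc3 a b h3 with hpos | hneg
  · -- φ3 > 0 on Ioo: h strictly decreasing, g b < 0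
    have hanti : StrictAntiOn h (Set.Icc a b) := by
      apply strictAntiOn_of_deriv_neg (convex_Icc a b) hhcont.continuousOn
      intro x hx
      rw [interior_Icc] at hx
      rw [(hdh x).deriv]
      have := hpos x hx
      nlinarith [hx.1]
    have hhneg : ∀ x ∈ Set.Ioo a b, h x < 0 := by
      intro x hx
      have := hanti (Set.left_mem_Icc.mpr hab.le) ⟨hx.1.le, hx.2.le⟩ hx.1
      rwa [hha] at this
    have : StrictAntiOn g (Set.Icc a b) := by
      apply strictAntiOn_of_deriv_neg (convex_Icc a b) hgcont.continuousOn
      intro x hx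
      rw [interior_Icc] at hx
      rw [(hdg x).deriv]
      exact div_neg_of_neg_of_pos (hhneg x hx) two_pos
    have := this (Set.left_mem_Icc.mpr hab.le) (Set.right_mem_Icc.mpr hab.le) hab
    rw [hga] at this
    have hgb : g b < 0 := this
    simpa [hg, hφ1] using hgb.ne
  · have hmono : StrictMonoOn h (Set.Icc a b) := by
      apply strictMonoOn_of_deriv_pos (convex_Icc a b) hhcont.continuousOn
      intro x hx
      rw [interior_Icc] at hx
      rw [(hdh x).deriv]
      have := hneg x hx
      nlinarith [hx.1]
    have hhpos : ∀ x ∈ Set.Ioo a b, 0 < h x := by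
      intro x hx
      have := hmono (Set.left_mem_Icc.mpr hab.le) ⟨hx.1.le, hx.2.le⟩ hx.1
      rwa [hha] at this
    have : StrictMonoOn g (Set.Icc a b) := by
      apply strictMonoOn_of_deriv_pos (convex_Icc a b) hgcont.continuousOn
      intro x hx
      rw [interior_Icc] at hx
      rw [(hdg x).deriv]
      exact div_pos (hhpos x hx) two_pos
    have := this (Set.left_mem_Icc.mpr hab.le) (Set.right_mem_Icc.mpr hab.le) hab
    rw [hga] at this
    simpa [hg, hφ1] using this.ne'

theorem stmt4 (Φ : ℝ → ℝ) (hΦ : ContDiff ℝ 3 Φ) (rL rR : ℝ) (hne : rL ≠ rR)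
    (hconv : ∀ r ∈ Set.Icc (min rR rL) (max rR rL), 0 < iteratedDeriv 2 Φ r)
    (hgen : ∀ r ∈ Set.Ioo (min rR rL) (max rR rL), iteratedDeriv 3 Φ r ≠ 0)
    (vL vR c : ℝ)
    (hmass : c * (rL - rR) + (vL - vR) = 0)
    (hmom : c * (vL - vR) + (deriv Φ rL - deriv Φ rR) = 0) :
    c * ((1 / 2) * vL ^ 2 + Φ rL - (1 / 2) * vR ^ 2 - Φ rR)
      + (vL * deriv Φ rL - vR * deriv Φ rR) ≠ 0 := by
  have hi2 : iteratedDeriv 2 Φ = deriv (deriv Φ) := by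
    rw [iteratedDeriv_succ, iteratedDeriv_one]
  have hi3 : iteratedDeriv 3 Φ = deriv (deriv (deriv Φ)) := by
    rw [iteratedDeriv_succ, iteratedDeriv_succ, iteratedDeriv_one]
  have hΦ' : ContDiff ℝ ((2:ℕ)+1) Φ := by exact_mod_cast hΦ
  have h1c : ContDiff ℝ 2 (deriv Φ) := by exact_mod_cast (contDiff_succ_iff_deriv.mp hΦ').2.2
  -- strict monotonicity of deriv Φ on the interval
  have hmonoφ : StrictMonoOn (deriv Φ) (Set.Icc (min rR rL) (max rR rL)) := by
    apply strictMonoOn_of_deriv_pos (convex_Icc _ _) (h1c.continuous.continuousOn)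
    intro x hx
    rw [interior_Icc] at hx
    have := hconv x ⟨hx.1.le, hx.2.le⟩
    rwa [hi2] at this
  have hc0 : c ≠ 0 := by
    intro hc
    subst hc
    simp only [zero_mul, zero_add] at hmass hmom
    have hL : rL ∈ Set.Icc (min rR rL) (max rR rL) :=
      ⟨min_le_right _ _, le_max_right _ _⟩
    have hR : rR ∈ Set.Icc (min rR rL) (max rR rL) :=
      ⟨min_le_left _ _, le_max_left _ _⟩
    have : deriv Φ rL = deriv Φ rR := by linarith
    exact hne (hmonoφ.injOn hL hR this)
  -- G ≠ 0
  have hG : Φ rL - Φ rR - (rL - rR) / 2 * (deriv Φ rL + deriv Φ rR) ≠ 0 := by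
    rcases lt_or_gt_of_ne hne with hlt | hgt
    · -- rL < rR
      have hmm : min rR rL = rL ∧ max rR rL = rR := ⟨min_eq_right hlt.le, max_eq_left hlt.le⟩
      have := trap Φ hΦ rL rR hlt (by
        intro x hx
        have := hgen x (by rw [hmm.1, hmm.2]; exact hx)
        rwa [hi3] at this)
      intro h0
      apply this
      linarith
    · have hmm : min rR rL = rR ∧ max rR rL = rL := ⟨min_eq_left hgt.le, max_eq_right hgt.le⟩
      have := trap Φ hΦ rR rL hgt (by
        intro x hx
        have := hgen x (by rw [hmm.1, hmm.2]; exact hx)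
        rwa [hi3] at this)
      intro h0
      apply this
      linarith
  intro hE
  apply mul_ne_zero hc0 hG
  have hv : vL - vR = -(c * (rL - rR)) := by linarith
  have hp : deriv Φ rL - deriv Φ rR = c ^ 2 * (rL - rR) := by
    have : c * (vL - vR) = -(c^2 * (rL - rR)) := by rw [hv]; ring
    linarith
  have hvL : vL = vR - c * (rL - rR) := by linarith
  subst hvL
  linear_combination hE - (vR - c * (rL - rR) / 2) * hp
end

section
/- Let Φ : ℝ → ℝ be three times continuously differentiable, let I ⊆ ℝ be an interval and r* ∈ I a point such that Φ'''(r) > 0 for all r ∈ I with r < r* and Φ'''(r) < 0 for all r ∈ I with r > r* (or with both signs reversed). Then for every a ∈ I there is at most one b ∈ I with b ≠ a and J(a,b) = 0; that is, if b, b' ∈ I satisfy b ≠ a, b' ≠ a, J(a,b) = 0 and J(a,b') = 0, then b = b'. -/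
open Set

/-- Two interior critical points from three sorted zeros (double Rolle). -/
lemma rolle3core {f : ℝ → ℝ} (hf : Differentiable ℝ f) {I : Set ℝ} (hI : I.OrdConnected)
    {p q r : ℝ} (hpI : p ∈ I) (hqI : q ∈ I) (hrI : r ∈ I)
    (hpq : p < q) (hqr : q < r)
    (hp : f p = 0) (hq : f q = 0) (hr : f r = 0) :
    ∃ c d, c ∈ I ∧ d ∈ I ∧ c < d ∧
      (∀ x, x = p ∨ x = q ∨ x = r → c ≠ x ∧ d ≠ x) ∧
      deriv f c = 0 ∧ deriv f d = 0 := by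
  obtain ⟨c, hc, hc0⟩ := exists_deriv_eq_zero hpq (hf.continuous.continuousOn)
    (by rw [hp, hq])
  obtain ⟨d, hd, hd0⟩ := exists_deriv_eq_zero hqr (hf.continuous.continuousOn)
    (by rw [hq, hr])
  refine ⟨c, d, hI.out hpI hqI ⟨hc.1.le, hc.2.le⟩, hI.out hqI hrI ⟨hd.1.le, hd.2.le⟩,
    hc.2.trans hd.1, ?_, hc0, hd0⟩
  rintro x (rfl | rfl | rfl)
  · exact ⟨ne_of_gt hc.1, ne_of_gt (hpq.trans hd.1)⟩
  · exact ⟨ne_of_lt hc.2, ne_of_gt hd.1⟩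
  · exact ⟨ne_of_lt (hc.2.trans hqr), ne_of_lt hd.2⟩

/-- Unordered version. -/
lemma rolle3 {f : ℝ → ℝ} (hf : Differentiable ℝ f) {I : Set ℝ} (hI : I.OrdConnected)
    {p q r : ℝ} (hpI : p ∈ I) (hqI : q ∈ I) (hrI : r ∈ I)
    (hpq : p ≠ q) (hpr : p ≠ r) (hqr : q ≠ r)
    (hp : f p = 0) (hq : f q = 0) (hr : f r = 0) :
    ∃ c d, c ∈ I ∧ d ∈ I ∧ c < d ∧
      (∀ x, x = p ∨ x = q ∨ x = r → c ≠ x ∧ d ≠ x) ∧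
      deriv f c = 0 ∧ deriv f d = 0 := by
  rcases lt_trichotomy p q with h1 | h1 | h1
  · rcases lt_trichotomy q r with h2 | h2 | h2
    · exact rolle3core hf hI hpI hqI hrI h1 h2 hp hq hr
    · exact absurd h2 hqr
    · rcases lt_trichotomy p r with h3 | h3 | h3
      · obtain ⟨c, d, u1, u2, u3, u4, u5, u6⟩ :=
          rolle3core hf hI hpI hrI hqI h3 h2 hp hr hq
        exact ⟨c, d, u1, u2, u3, fun x hx => u4 x (by tauto), u5, u6⟩
      · exact absurd h3 hpr
      · obtain ⟨c, d, u1, u2, u3, u4, u5, u6⟩ :=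
          rolle3core hf hI hrI hpI hqI h3 h1 hr hp hq
        exact ⟨c, d, u1, u2, u3, fun x hx => u4 x (by tauto), u5, u6⟩
  · exact absurd h1 hpq
  · rcases lt_trichotomy p r with h2 | h2 | h2
    · obtain ⟨c, d, u1, u2, u3, u4, u5, u6⟩ :=
        rolle3core hf hI hqI hpI hrI h1 h2 hq hp hr
      exact ⟨c, d, u1, u2, u3, fun x hx => u4 x (by tauto), u5, u6⟩
    · exact absurd h2 hpr
    · rcases lt_trichotomy q r with h3 | h3 | h3
      · obtain ⟨c, d, u1, u2, u3, u4, u5, u6⟩ :=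
          rolle3core hf hI hqI hrI hpI h3 h2 hq hr hp
        exact ⟨c, d, u1, u2, u3, fun x hx => u4 x (by tauto), u5, u6⟩
      · exact absurd h3 hqr
      · obtain ⟨c, d, u1, u2, u3, u4, u5, u6⟩ :=
          rolle3core hf hI hrI hqI hpI h3 h1 hr hq hp
        exact ⟨c, d, u1, u2, u3, fun x hx => u4 x (by tauto), u5, u6⟩

theorem stmt5 (Φ : ℝ → ℝ) (hΦ : ContDiff ℝ 3 Φ)
    (I : Set ℝ) (hI : I.OrdConnected) (rs : ℝ) (hrs : rs ∈ I)
    (hturn :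
      ((∀ r ∈ I, r < rs → 0 < iteratedDeriv 3 Φ r) ∧
       (∀ r ∈ I, rs < r → iteratedDeriv 3 Φ r < 0)) ∨
      ((∀ r ∈ I, r < rs → iteratedDeriv 3 Φ r < 0) ∧
       (∀ r ∈ I, rs < r → 0 < iteratedDeriv 3 Φ r)))
    (a b b' : ℝ) (ha : a ∈ I) (hb : b ∈ I) (hb' : b' ∈ I)
    (hba : b ≠ a) (hb'a : b' ≠ a)
    (hJ : consJ Φ a b = 0) (hJ' : consJ Φ a b' = 0) :
    b = b' := by
  by_contra hbb'
  -- derivative bookkeeping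
  have hΦd : Differentiable ℝ Φ := hΦ.differentiable (by norm_num)
  have h2 : ContDiff ℝ 2 (deriv Φ) :=
    (contDiff_succ_iff_deriv.mp (show ContDiff ℝ (2 + 1) Φ from hΦ)).2.2
  have hΦ'd : Differentiable ℝ (deriv Φ) := h2.differentiable (by norm_num)
  have h1 : ContDiff ℝ 1 (deriv (deriv Φ)) :=
    (contDiff_succ_iff_deriv.mp (show ContDiff ℝ (1 + 1) (deriv Φ) from h2)).2.2
  have hΦ''d : Differentiable ℝ (deriv (deriv Φ)) := h1.differentiable (by norm_num)
  have h3eq : iteratedDeriv 3 Φ = deriv (deriv (deriv Φ)) := by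
    simp [show (3 : ℕ) = 2 + 1 from rfl, show (2 : ℕ) = 1 + 1 from rfl,
      iteratedDeriv_succ, iteratedDeriv_one]
  -- the auxiliary function h
  set h : ℝ → ℝ := fun x => deriv Φ a - deriv Φ x - (a - x) * deriv (deriv Φ) x with hdefh
  have hg : ∀ x, HasDerivAt (fun y => consJ Φ a y)
      ((deriv Φ a - deriv Φ x - (a - x) * deriv (deriv Φ) x) / 2) x := by
    intro x
    have H1 : HasDerivAt Φ (deriv Φ x) x := (hΦd x).hasDerivAt
    have H2 : HasDerivAt (deriv Φ) (deriv (deriv Φ) x) x := (hΦ'd x).hasDerivAt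
    have : HasDerivAt (fun y => Φ a - Φ y - ((a - y) / 2) * (deriv Φ a + deriv Φ y))
        (0 - deriv Φ x - (((0 - 1) / 2) * (deriv Φ a + deriv Φ x)
          + ((a - x) / 2) * (0 + deriv (deriv Φ) x))) x := by
      exact (((hasDerivAt_const x (Φ a)).sub H1).sub
        ((((hasDerivAt_const x a).sub (hasDerivAt_id x)).div_const 2).mul
          ((hasDerivAt_const x (deriv Φ a)).add H2)))
    convert this using 1
    · rfl
    ring
  have hh : ∀ x, HasDerivAt h ((x - a) * deriv (deriv (deriv Φ)) x) x := by
    intro x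
    have H2 : HasDerivAt (deriv Φ) (deriv (deriv Φ) x) x := (hΦ'd x).hasDerivAt
    have H3 : HasDerivAt (deriv (deriv Φ)) (deriv (deriv (deriv Φ)) x) x := (hΦ''d x).hasDerivAt
    have : HasDerivAt (fun y => deriv Φ a - deriv Φ y - (a - y) * deriv (deriv Φ) y)
        (0 - deriv (deriv Φ) x - ((0 - 1) * deriv (deriv Φ) x
          + (a - x) * deriv (deriv (deriv Φ)) x)) x := by
      exact ((hasDerivAt_const x (deriv Φ a)).sub H2).sub
        (((hasDerivAt_const x a).sub (hasDerivAt_id x)).mul H3)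
    convert this using 1
    ring
  have hgd : Differentiable ℝ (fun y => consJ Φ a y) := fun x => (hg x).differentiableAt
  have hhd : Differentiable ℝ h := fun x => (hh x).differentiableAt
  -- zeros of g : a, b, b'
  have hga : consJ Φ a a = 0 := by simp [consJ]
  obtain ⟨c, d, hcI, hdI, hcd, hne, hc0, hd0⟩ :=
    rolle3 hgd hI ha hb hb' (Ne.symm hba) (Ne.symm hb'a) hbb' hga hJ hJ'
  -- zeros of h : a, c, d
  have hzero : ∀ x, deriv (fun y => consJ Φ a y) x = 0 → h x = 0 := by
    intro x hx
    have := (hg x).deriv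
    rw [hx] at this
    have : (deriv Φ a - deriv Φ x - (a - x) * deriv (deriv Φ) x) / 2 = 0 := this.symm
    simpa [hdefh] using by linarith [this]
  have hha : h a = 0 := by simp [hdefh]
  have hca : c ≠ a := (hne a (Or.inl rfl)).1
  have hda : d ≠ a := (hne a (Or.inl rfl)).2
  obtain ⟨e, e', heI, he'I, hee', hne', he0, he'0⟩ :=
    rolle3 hhd hI ha hcI hdI (Ne.symm hca) (Ne.symm hda) (ne_of_lt hcd)
      hha (hzero c hc0) (hzero d hd0)
  -- derivative of h at e, e' gives Φ''' = 0 there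
  have key : ∀ x ∈ I, x ≠ a → deriv h x = 0 → x = rs := by
    intro x hxI hxa hx
    have hx3 : deriv (deriv (deriv Φ)) x = 0 := by
      have := (hh x).deriv
      rw [hx] at this
      rcases mul_eq_zero.mp this.symm with h' | h'
      · exact absurd (by linarith [sub_eq_zero.mp h']) hxa
      · exact h'
    by_contra hxrs
    rcases lt_or_gt_of_ne hxrs with hlt | hgt
    · rcases hturn with ⟨hl, _⟩ | ⟨hl, _⟩ <;>
        · have := hl x hxI hlt
          rw [h3eq, hx3] at this
          exact lt_irrefl 0 this
    · rcases hturn with ⟨_, hr⟩ | ⟨_, hr⟩ <;>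
        · have := hr x hxI hgt
          rw [h3eq, hx3] at this
          exact lt_irrefl 0 this
  have hea : e ≠ a := (hne' a (Or.inl rfl)).1
  have he'a : e' ≠ a := (hne' a (Or.inl rfl)).2
  have h1' := key e heI hea he0
  have h2' := key e' he'I he'a he'0
  rw [h1', h2'] at hee'
  exact lt_irrefl rs hee'
end

section
/- Let Φ : ℝ → ℝ be three times continuously differentiable, let I ⊆ ℝ be an interval and r* ∈ I a point such that Φ'''(r) > 0 for all r ∈ I with r < r* and Φ'''(r) < 0 for all r ∈ I with r > r* (or with both signs reversed). Then the off-diagonal zero set of J in I × I is the graph of a strictly decreasing function: if (a,b) and (a',b') lie in I × I with a ≠ b, a' ≠ b', J(a,b) = 0, J(a',b') = 0 and a < a', then b > b'. -/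
open Set intervalIntegral Filter Topology


section aux
variable {Φ : ℝ → ℝ} (hΦ : ContDiff ℝ 3 Φ)


include hΦ

lemma hd1 : ∀ t, HasDerivAt Φ (deriv Φ t) t :=
  fun t => (hΦ.differentiable (by norm_num) t).hasDerivAt

lemma cd2 : ContDiff ℝ 2 (deriv Φ) := by
  have := contDiff_succ_iff_deriv.mp (show ContDiff ℝ (2+1) Φ by exact_mod_cast hΦ)
  exact this.2.2

lemma hd2 : ∀ t, HasDerivAt (deriv Φ) (deriv (deriv Φ) t) t :=
  fun t => ((cd2 hΦ).differentiable (by norm_num) t).hasDerivAt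

lemma cd3 : ContDiff ℝ 1 (deriv (deriv Φ)) := by
  have := contDiff_succ_iff_deriv.mp (show ContDiff ℝ (1+1) (deriv Φ) by exact_mod_cast cd2 hΦ)
  exact this.2.2

lemma hd3 : ∀ t, HasDerivAt (deriv (deriv Φ)) (deriv (deriv (deriv Φ)) t) t :=
  fun t => ((cd3 hΦ).differentiable (by norm_num) t).hasDerivAt

lemma cont3 : Continuous (deriv (deriv (deriv Φ))) :=
  (cd3 hΦ).continuous_deriv (by norm_num)

lemma int1 (a b : ℝ) :
    ∫ t in a..b, (b - t) * deriv (deriv (deriv Φ)) t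
      = deriv Φ b - deriv Φ a - (b - a) * deriv (deriv Φ) a := by
  have h : ∀ t ∈ uIcc a b,
      HasDerivAt (fun t => (b - t) * deriv (deriv Φ) t + deriv Φ t)
        ((b - t) * deriv (deriv (deriv Φ)) t) t := by
    intro t _
    have h1 := (((hasDerivAt_id t).const_sub b).fun_mul (hd3 hΦ t)).fun_add (hd2 hΦ t)
    simp only [id_eq] at h1
    exact h1.congr_deriv (by ring)
  have := integral_eq_sub_of_hasDerivAt h
    (((continuous_const.sub continuous_id).mul (cont3 hΦ)).intervalIntegrable a b)
  rw [this]; ring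

lemma int2 (a b : ℝ) :
    ∫ t in a..b, (t - a) * deriv (deriv (deriv Φ)) t
      = (b - a) * deriv (deriv Φ) b - deriv Φ b + deriv Φ a := by
  have h : ∀ t ∈ uIcc a b,
      HasDerivAt (fun t => (t - a) * deriv (deriv Φ) t - deriv Φ t)
        ((t - a) * deriv (deriv (deriv Φ)) t) t := by
    intro t _
    have h1 := (((hasDerivAt_id t).sub_const a).fun_mul (hd3 hΦ t)).fun_sub (hd2 hΦ t)
    simp only [id_eq] at h1
    exact h1.congr_deriv (by ring)
  have := integral_eq_sub_of_hasDerivAt h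
    (((continuous_id.sub continuous_const).mul (cont3 hΦ)).intervalIntegrable a b)
  rw [this]; ring

lemma int3 (a b : ℝ) :
    ∫ t in a..b, (t - a) * (b - t) * deriv (deriv (deriv Φ)) t = 2 * consJ Φ a b := by
  have h : ∀ t ∈ uIcc a b,
      HasDerivAt (fun t => (t - a) * (b - t) * deriv (deriv Φ) t
          + (2 * t - a - b) * deriv Φ t - 2 * Φ t)
        ((t - a) * (b - t) * deriv (deriv (deriv Φ)) t) t := by
    intro t _
    have h1 := ((((hasDerivAt_id t).sub_const a).fun_mul ((hasDerivAt_id t).const_sub b)).fun_mul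
        (hd3 hΦ t)).fun_add
      ((((hasDerivAt_id t).const_mul 2).sub_const a |>.sub_const b).fun_mul (hd2 hΦ t)) |>.fun_sub
      ((hd1 hΦ t).const_mul 2)
    simp only [id_eq] at h1
    exact h1.congr_deriv (by ring)
  have := integral_eq_sub_of_hasDerivAt h
    ((((continuous_id.sub continuous_const).mul (continuous_const.sub continuous_id)).mul
      (cont3 hΦ)).intervalIntegrable a b)
  rw [this, consJ]; ring

end aux

section sign
variable {Φ : ℝ → ℝ} (hΦ : ContDiff ℝ 3 Φ) {I : Set ℝ} (hI : I.OrdConnected) {rs : ℝ}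
  (hpos : ∀ r ∈ I, r < rs → 0 < deriv (deriv (deriv Φ)) r)
  (hneg : ∀ r ∈ I, rs < r → deriv (deriv (deriv Φ)) r < 0)

include hΦ hI hpos hneg

lemma straddle {x y : ℝ} (hxI : x ∈ I) (hyI : y ∈ I) (hxy : x < y)
    (hJ : consJ Φ x y = 0) : x < rs ∧ rs < y := by
  have hsub : Icc x y ⊆ I := hI.out hxI hyI
  have hint0 : ∫ t in x..y, (t - x) * (y - t) * deriv (deriv (deriv Φ)) t = 0 := by
    rw [int3 hΦ, hJ]; ring
  have hcont : Continuous (fun t => (t - x) * (y - t) * deriv (deriv (deriv Φ)) t) :=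
    ((continuous_id.sub continuous_const).mul (continuous_const.sub continuous_id)).mul (cont3 hΦ)
  constructor
  · by_contra h
    push_neg at h
    have h2 : 0 < ∫ t in x..y, -((t - x) * (y - t) * deriv (deriv (deriv Φ)) t) := by
      refine intervalIntegral_pos_of_pos_on (hcont.neg.intervalIntegrable x y) ?_ hxy
      intro t ht
      have htI : t ∈ I := hsub ⟨ht.1.le, ht.2.le⟩
      have h3 := hneg t htI (lt_of_le_of_lt h ht.1)
      nlinarith [mul_pos (sub_pos.mpr ht.1) (sub_pos.mpr ht.2), h3]
    rw [intervalIntegral.integral_neg, hint0] at h2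
    norm_num at h2
  · by_contra h
    push_neg at h
    have h2 : 0 < ∫ t in x..y, (t - x) * (y - t) * deriv (deriv (deriv Φ)) t := by
      refine intervalIntegral_pos_of_pos_on (hcont.intervalIntegrable x y) ?_ hxy
      intro t ht
      have htI : t ∈ I := hsub ⟨ht.1.le, ht.2.le⟩
      have h3 := hpos t htI (lt_of_lt_of_le ht.2 h)
      nlinarith [mul_pos (sub_pos.mpr ht.1) (sub_pos.mpr ht.2), h3]
    rw [hint0] at h2
    norm_num at h2

lemma chebyshev {x y : ℝ} (hxI : x ∈ I) (hyI : y ∈ I) (hx : x < rs) (hy : rs < y)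
    (hJ : consJ Φ x y = 0) :
    (0 < ∫ t in x..y, (y - t) * deriv (deriv (deriv Φ)) t) ∧
    (∫ t in x..y, (t - x) * deriv (deriv (deriv Φ)) t) < 0 := by
  have hsub : Icc x y ⊆ I := hI.out hxI hyI
  have hxy : x < y := hx.trans hy
  have hint0 : ∫ t in x..y, (t - x) * (y - t) * deriv (deriv (deriv Φ)) t = 0 := by
    rw [int3 hΦ, hJ]; ring
  have hcw : Continuous (fun t => (t - x) * (y - t) * deriv (deriv (deriv Φ)) t) :=
    ((continuous_id.sub continuous_const).mul (continuous_const.sub continuous_id)).mul (cont3 hΦ)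
  have hcA : Continuous (fun t => (y - t) * (rs - t) * deriv (deriv (deriv Φ)) t) :=
    ((continuous_const.sub continuous_id).mul (continuous_const.sub continuous_id)).mul (cont3 hΦ)
  have hcB : Continuous (fun t => (t - x) * (t - rs) * deriv (deriv (deriv Φ)) t) :=
    ((continuous_id.sub continuous_const).mul (continuous_id.sub continuous_const)).mul (cont3 hΦ)
  have hcy : Continuous (fun t => (y - t) * deriv (deriv (deriv Φ)) t) :=
    (continuous_const.sub continuous_id).mul (cont3 hΦ)
  have hcx : Continuous (fun t => (t - x) * deriv (deriv (deriv Φ)) t) :=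
    (continuous_id.sub continuous_const).mul (cont3 hΦ)
  -- positivity of the A-integral
  have hA1 : 0 < ∫ t in x..rs, (y - t) * (rs - t) * deriv (deriv (deriv Φ)) t := by
    refine intervalIntegral_pos_of_pos_on (hcA.intervalIntegrable _ _) ?_ hx
    intro t ht
    have htI : t ∈ I := hsub ⟨ht.1.le, (ht.2.trans hy).le⟩
    have h3 := hpos t htI ht.2
    nlinarith [mul_pos (sub_pos.mpr (ht.2.trans hy)) (sub_pos.mpr ht.2), h3]
  have hA2 : 0 < ∫ t in rs..y, (y - t) * (rs - t) * deriv (deriv (deriv Φ)) t := by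
    refine intervalIntegral_pos_of_pos_on (hcA.intervalIntegrable _ _) ?_ hy
    intro t ht
    have htI : t ∈ I := hsub ⟨(hx.trans ht.1).le, ht.2.le⟩
    have h3 := hneg t htI ht.1
    nlinarith [mul_pos_of_neg_of_neg (show rs - t < 0 by linarith [ht.1]) h3,
      sub_pos.mpr ht.2]
  have hA : 0 < ∫ t in x..y, (y - t) * (rs - t) * deriv (deriv (deriv Φ)) t := by
    rw [← integral_add_adjacent_intervals (hcA.intervalIntegrable x rs)
      (hcA.intervalIntegrable rs y)]
    linarith
  -- negativity of the B-integral
  have hB1 : 0 < ∫ t in x..rs, -((t - x) * (t - rs) * deriv (deriv (deriv Φ)) t) := by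
    refine intervalIntegral_pos_of_pos_on (hcB.neg.intervalIntegrable _ _) ?_ hx
    intro t ht
    have htI : t ∈ I := hsub ⟨ht.1.le, (ht.2.trans hy).le⟩
    have h3 := hpos t htI ht.2
    nlinarith [mul_pos (sub_pos.mpr ht.1) h3, sub_pos.mpr ht.2]
  have hB2 : 0 < ∫ t in rs..y, -((t - x) * (t - rs) * deriv (deriv (deriv Φ)) t) := by
    refine intervalIntegral_pos_of_pos_on (hcB.neg.intervalIntegrable _ _) ?_ hy
    intro t ht
    have htI : t ∈ I := hsub ⟨(hx.trans ht.1).le, ht.2.le⟩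
    have h3 := hneg t htI ht.1
    nlinarith [mul_pos (show (0:ℝ) < t - x by linarith [ht.1]) (sub_pos.mpr ht.1), h3]
  have hB : (∫ t in x..y, (t - x) * (t - rs) * deriv (deriv (deriv Φ)) t) < 0 := by
    have hs : 0 < ∫ t in x..y, -((t - x) * (t - rs) * deriv (deriv (deriv Φ)) t) := by
      rw [← integral_add_adjacent_intervals (f := fun t => -((t - x) * (t - rs) * deriv (deriv (deriv Φ)) t)) (hcB.neg.intervalIntegrable x rs)
        (hcB.neg.intervalIntegrable rs y)]
      linarith
    rw [intervalIntegral.integral_neg] at hs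
    linarith
  constructor
  · -- (rs - x) * ∫ (y-t) D3 = ∫ (t-x)(y-t) D3 + ∫ (y-t)(rs-t) D3
    have hid : (rs - x) * ∫ t in x..y, (y - t) * deriv (deriv (deriv Φ)) t
        = (∫ t in x..y, (t - x) * (y - t) * deriv (deriv (deriv Φ)) t)
          + ∫ t in x..y, (y - t) * (rs - t) * deriv (deriv (deriv Φ)) t := by
      rw [← intervalIntegral.integral_const_mul,
        ← intervalIntegral.integral_add (hcw.intervalIntegrable _ _) (hcA.intervalIntegrable _ _)]
      refine intervalIntegral.integral_congr fun t _ => by ring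
    have h3 : 0 < (rs - x) * ∫ t in x..y, (y - t) * deriv (deriv (deriv Φ)) t := by
      rw [hid, hint0]; linarith
    rcases mul_pos_iff.mp h3 with ⟨_, h⟩ | ⟨h, _⟩
    · exact h
    · linarith
  · have hid : (y - rs) * ∫ t in x..y, (t - x) * deriv (deriv (deriv Φ)) t
        = (∫ t in x..y, (t - x) * (y - t) * deriv (deriv (deriv Φ)) t)
          + ∫ t in x..y, (t - x) * (t - rs) * deriv (deriv (deriv Φ)) t := by
      rw [← intervalIntegral.integral_const_mul,
        ← intervalIntegral.integral_add (hcw.intervalIntegrable _ _) (hcB.intervalIntegrable _ _)]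
      refine intervalIntegral.integral_congr fun t _ => by ring
    have h3 : (y - rs) * (∫ t in x..y, (t - x) * deriv (deriv (deriv Φ)) t) < 0 := by
      rw [hid, hint0]; linarith
    rcases mul_neg_iff.mp h3 with ⟨_, h⟩ | ⟨h, _⟩
    · exact h
    · linarith

/-- Both "partial derivatives" of `consJ` are negative at an off-diagonal zero. -/
lemma partials_neg {x y : ℝ} (hxI : x ∈ I) (hyI : y ∈ I) (hx : x < rs) (hy : rs < y)
    (hJ : consJ Φ x y = 0) :
    deriv Φ x - deriv Φ y - (x - y) * deriv (deriv Φ) x < 0 ∧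
    deriv Φ x - deriv Φ y - (x - y) * deriv (deriv Φ) y < 0 := by
  obtain ⟨hA, hB⟩ := chebyshev hΦ hI hpos hneg hxI hyI hx hy hJ
  rw [int1 hΦ] at hA
  rw [int2 hΦ] at hB
  constructor <;> linarith

end sign

lemma no_double_zero (F F' : ℝ → ℝ) (hd : ∀ s, HasDerivAt F (F' s) s)
    (hz : ∀ s ∈ Icc (0:ℝ) 1, F s = 0 → F' s < 0)
    (h0 : F 0 = 0) (h1 : F 1 = 0) : False := by
  have hc : Continuous F := continuous_iff_continuousAt.mpr fun s => (hd s).continuousAt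
  -- a point u ∈ (0,1) with F u < 0
  have hF'0 : F' 0 < 0 := hz 0 ⟨le_refl _, zero_le_one⟩ h0
  have hsl0 : Tendsto (slope F 0) (𝓝[>] (0:ℝ)) (𝓝 (F' 0)) :=
    (hasDerivAt_iff_tendsto_slope.mp (hd 0)).mono_left
      (nhdsWithin_mono 0 fun x hx => (ne_of_gt hx : x ≠ 0))
  have hmem : Ioo (0:ℝ) 1 ∈ 𝓝[>] (0:ℝ) :=
    Ioo_mem_nhdsGT_of_mem ⟨le_refl 0, zero_lt_one⟩
  obtain ⟨u, hsu, huIoo⟩ :=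
    ((hsl0.eventually_lt_const hF'0).and (eventually_of_mem hmem fun x hx => hx)).exists
  have hFu : F u < 0 := by
    rw [slope_def_field, h0] at hsu
    rcases div_neg_iff.mp (by simpa using hsu) with ⟨h, h'⟩ | ⟨h, h'⟩ <;> linarith [huIoo.1]
  -- a point v ∈ (u,1) with F v > 0
  have hF'1 : F' 1 < 0 := hz 1 ⟨zero_le_one, le_refl _⟩ h1
  have hsl1 : Tendsto (slope F 1) (𝓝[<] (1:ℝ)) (𝓝 (F' 1)) :=
    (hasDerivAt_iff_tendsto_slope.mp (hd 1)).mono_left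
      (nhdsWithin_mono 1 fun x hx => (ne_of_lt hx : x ≠ 1))
  have hmem1 : Ioo u 1 ∈ 𝓝[<] (1:ℝ) :=
    Ioo_mem_nhdsLT_of_mem ⟨huIoo.2, le_refl 1⟩
  obtain ⟨v, hsv, hvIoo⟩ :=
    ((hsl1.eventually_lt_const hF'1).and (eventually_of_mem hmem1 fun x hx => hx)).exists
  have hFv : 0 < F v := by
    rw [slope_def_field, h1] at hsv
    rcases div_neg_iff.mp (by simpa using hsv) with ⟨h, h'⟩ | ⟨h, h'⟩ <;> linarith [hvIoo.2]
  have huv : u < v := hvIoo.1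
  -- the zero set on [u,v]
  set Z : Set ℝ := Icc u v ∩ F ⁻¹' {0} with hZ
  have hZc : IsClosed Z := isClosed_Icc.inter (isClosed_singleton.preimage hc)
  have hZne : Z.Nonempty := by
    obtain ⟨c, hcmem, hcz⟩ := intermediate_value_Icc huv.le hc.continuousOn
      ⟨hFu.le, hFv.le⟩
    exact ⟨c, hcmem, hcz⟩
  have hZbdd : BddBelow Z := ⟨u, fun z hz => hz.1.1⟩
  set s := sInf Z with hs
  have hsZ : s ∈ Z := hZc.csInf_mem hZne hZbdd
  have hFs : F s = 0 := hsZ.2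
  have hus : u < s := lt_of_le_of_ne hsZ.1.1 (by intro h; rw [h] at hFu; exact hFu.ne hFs)
  have hsIcc : s ∈ Icc (0:ℝ) 1 := ⟨le_trans huIoo.1.le hsZ.1.1,
    le_trans hsZ.1.2 hvIoo.2.le⟩
  have hF's : F' s < 0 := hz s hsIcc hFs
  -- a point w ∈ (u, s) with F w > 0
  have hsls : Tendsto (slope F s) (𝓝[<] s) (𝓝 (F' s)) :=
    (hasDerivAt_iff_tendsto_slope.mp (hd s)).mono_left
      (nhdsWithin_mono s fun x hx => (ne_of_lt hx : x ≠ s))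
  have hmems : Ioo u s ∈ 𝓝[<] s := Ioo_mem_nhdsLT_of_mem ⟨hus, le_refl s⟩
  obtain ⟨w, hsw, hwIoo⟩ :=
    ((hsls.eventually_lt_const hF's).and (eventually_of_mem hmems fun x hx => hx)).exists
  have hFw : 0 < F w := by
    rw [slope_def_field, hFs] at hsw
    rcases div_neg_iff.mp (by simpa using hsw) with ⟨h, h'⟩ | ⟨h, h'⟩ <;> linarith [hwIoo.2]
  -- IVT on [u,w] yields a zero below s
  obtain ⟨c, hcmem, hcz⟩ := intermediate_value_Icc hwIoo.1.le hc.continuousOn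
    ⟨hFu.le, hFw.le⟩
  have hcZ : c ∈ Z := ⟨⟨hcmem.1, le_trans hcmem.2 (le_trans hwIoo.2.le hsZ.1.2)⟩, hcz⟩
  have := csInf_le hZbdd hcZ
  have : s ≤ w := le_trans this hcmem.2
  exact absurd this (not_le.mpr hwIoo.2)


section segment
variable {Φ : ℝ → ℝ} (hΦ : ContDiff ℝ 3 Φ) {I : Set ℝ} (hI : I.OrdConnected) {rs : ℝ}
  (hpos : ∀ r ∈ I, r < rs → 0 < deriv (deriv (deriv Φ)) r)
  (hneg : ∀ r ∈ I, rs < r → deriv (deriv (deriv Φ)) r < 0)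

include hΦ hI hpos hneg

lemma no_two {x y x' y' : ℝ} (hxI : x ∈ I) (hyI : y ∈ I) (hx'I : x' ∈ I) (hy'I : y' ∈ I)
    (hx : x < rs) (hy : rs < y) (hx' : x' < rs) (hy' : rs < y')
    (hJ : consJ Φ x y = 0) (hJ' : consJ Φ x' y' = 0)
    (hle1 : x ≤ x') (hle2 : y ≤ y') (hlt : x < x' ∨ y < y') : False := by
  have hdA : ∀ s : ℝ, HasDerivAt (fun s : ℝ => x + s * (x' - x)) (x' - x) s := fun s => by
    simpa using ((hasDerivAt_id s).mul_const (x' - x)).const_add x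
  have hdB : ∀ s : ℝ, HasDerivAt (fun s : ℝ => y + s * (y' - y)) (y' - y) s := fun s => by
    simpa using ((hasDerivAt_id s).mul_const (y' - y)).const_add y
  refine no_double_zero (fun s => consJ Φ (x + s * (x' - x)) (y + s * (y' - y)))
    (fun s => (x' - x) * ((deriv Φ (x + s * (x' - x)) - deriv Φ (y + s * (y' - y))
        - ((x + s * (x' - x)) - (y + s * (y' - y))) * deriv (deriv Φ) (x + s * (x' - x))) / 2)
      + (y' - y) * ((deriv Φ (x + s * (x' - x)) - deriv Φ (y + s * (y' - y))
        - ((x + s * (x' - x)) - (y + s * (y' - y))) * deriv (deriv Φ) (y + s * (y' - y))) / 2))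
    ?_ ?_ ?_ ?_
  · intro s
    have h1 : HasDerivAt (fun s : ℝ => Φ (x + s * (x' - x)))
        (deriv Φ (x + s * (x' - x)) * (x' - x)) s := (hd1 hΦ _).comp s (hdA s)
    have h2 : HasDerivAt (fun s : ℝ => Φ (y + s * (y' - y)))
        (deriv Φ (y + s * (y' - y)) * (y' - y)) s := (hd1 hΦ _).comp s (hdB s)
    have h3 : HasDerivAt (fun s : ℝ => deriv Φ (x + s * (x' - x)))
        (deriv (deriv Φ) (x + s * (x' - x)) * (x' - x)) s := (hd2 hΦ _).comp s (hdA s)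
    have h4 : HasDerivAt (fun s : ℝ => deriv Φ (y + s * (y' - y)))
        (deriv (deriv Φ) (y + s * (y' - y)) * (y' - y)) s := (hd2 hΦ _).comp s (hdB s)
    have h5 := (((hdA s).fun_sub (hdB s)).div_const 2).fun_mul (h3.fun_add h4)
    have h6 := (h1.fun_sub h2).fun_sub h5
    simp only [consJ]
    exact h6.congr_deriv (by ring)
  · intro s hs hFs
    have hAle : x ≤ x + s * (x' - x) ∧ x + s * (x' - x) ≤ x' := by
      constructor <;> nlinarith [hs.1, hs.2, sub_nonneg.mpr hle1]
    have hBle : y ≤ y + s * (y' - y) ∧ y + s * (y' - y) ≤ y' := by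
      constructor <;> nlinarith [hs.1, hs.2, sub_nonneg.mpr hle2]
    have hAI : x + s * (x' - x) ∈ I := hI.out hxI hx'I ⟨hAle.1, hAle.2⟩
    have hBI : y + s * (y' - y) ∈ I := hI.out hyI hy'I ⟨hBle.1, hBle.2⟩
    have hArs : x + s * (x' - x) < rs := lt_of_le_of_lt hAle.2 hx'
    have hBrs : rs < y + s * (y' - y) := lt_of_lt_of_le hy hBle.1
    obtain ⟨hPa, hPb⟩ := partials_neg hΦ hI hpos hneg hAI hBI hArs hBrs hFs
    have hvA : 0 ≤ x' - x := sub_nonneg.mpr hle1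
    have hvB : 0 ≤ y' - y := sub_nonneg.mpr hle2
    rcases hlt with h | h
    · have t1 : (x' - x) * ((deriv Φ (x + s * (x' - x)) - deriv Φ (y + s * (y' - y))
          - ((x + s * (x' - x)) - (y + s * (y' - y))) * deriv (deriv Φ) (x + s * (x' - x))) / 2)
          < 0 := mul_neg_of_pos_of_neg (sub_pos.mpr h) (by linarith)
      have t2 : (y' - y) * ((deriv Φ (x + s * (x' - x)) - deriv Φ (y + s * (y' - y))
          - ((x + s * (x' - x)) - (y + s * (y' - y))) * deriv (deriv Φ) (y + s * (y' - y))) / 2)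
          ≤ 0 := mul_nonpos_of_nonneg_of_nonpos hvB (by linarith)
      linarith
    · have t1 : (x' - x) * ((deriv Φ (x + s * (x' - x)) - deriv Φ (y + s * (y' - y))
          - ((x + s * (x' - x)) - (y + s * (y' - y))) * deriv (deriv Φ) (x + s * (x' - x))) / 2)
          ≤ 0 := mul_nonpos_of_nonneg_of_nonpos hvA (by linarith)
      have t2 : (y' - y) * ((deriv Φ (x + s * (x' - x)) - deriv Φ (y + s * (y' - y))
          - ((x + s * (x' - x)) - (y + s * (y' - y))) * deriv (deriv Φ) (y + s * (y' - y))) / 2)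
          < 0 := mul_neg_of_pos_of_neg (sub_pos.mpr h) (by linarith)
      linarith
  · simpa using hJ
  · show consJ Φ (x + 1 * (x' - x)) (y + 1 * (y' - y)) = 0
    rw [show x + 1 * (x' - x) = x' from by ring, show y + 1 * (y' - y) = y' from by ring]
    exact hJ'

omit hΦ hI hpos hneg in
lemma consJ_swap (Ψ : ℝ → ℝ) (u v : ℝ) : consJ Ψ v u = - consJ Ψ u v := by
  simp only [consJ]; ring

lemma key {a b a' b' : ℝ} (ha : a ∈ I) (hb : b ∈ I) (ha' : a' ∈ I) (hb' : b' ∈ I)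
    (hab : a ≠ b) (hab' : a' ≠ b')
    (hJ : consJ Φ a b = 0) (hJ' : consJ Φ a' b' = 0) (haa' : a < a') : b > b' := by
  have hsw : consJ Φ b a = 0 := by rw [consJ_swap, hJ]; ring
  have hsw' : consJ Φ b' a' = 0 := by rw [consJ_swap, hJ']; ring
  have hstr : (a < rs ∧ rs < b) ∨ (b < rs ∧ rs < a) := by
    rcases lt_or_gt_of_ne hab with h | h
    · exact Or.inl (straddle hΦ hI hpos hneg ha hb h hJ)
    · exact Or.inr (straddle hΦ hI hpos hneg hb ha h hsw)
  have hstr' : (a' < rs ∧ rs < b') ∨ (b' < rs ∧ rs < a') := by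
    rcases lt_or_gt_of_ne hab' with h | h
    · exact Or.inl (straddle hΦ hI hpos hneg ha' hb' h hJ')
    · exact Or.inr (straddle hΦ hI hpos hneg hb' ha' h hsw')
  rcases hstr with ⟨h1, h2⟩ | ⟨h1, h2⟩ <;> rcases hstr' with ⟨h1', h2'⟩ | ⟨h1', h2'⟩
  · -- a < rs < b and a' < rs < b'
    by_contra hcon
    push_neg at hcon
    exact no_two hΦ hI hpos hneg ha hb ha' hb' h1 h2 h1' h2' hJ hJ' haa'.le hcon (Or.inl haa')
  · -- a < rs < b and b' < rs < a'
    exact lt_trans h1' h2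
  · -- b < rs < a and a' < rs < b' : impossible
    exact absurd haa' (not_lt.mpr (le_of_lt (lt_trans h1' h2)))
  · -- b < rs < a and b' < rs < a'
    by_contra hcon
    push_neg at hcon
    exact no_two hΦ hI hpos hneg hb ha hb' ha' h1 h2 h1' h2' hsw hsw' hcon haa'.le
      (Or.inr haa')

end segment


lemma d3_eq (Ψ : ℝ → ℝ) : iteratedDeriv 3 Ψ = deriv (deriv (deriv Ψ)) := by
  rw [show (3:ℕ) = 0+1+1+1 from rfl, iteratedDeriv_succ, iteratedDeriv_succ, iteratedDeriv_succ,
    iteratedDeriv_zero]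

lemma consJ_neg (Φ : ℝ → ℝ) (a b : ℝ) : consJ (fun t => -(Φ t)) a b = - consJ Φ a b := by
  simp only [consJ, deriv.fun_neg]; ring

theorem stmt6 (Φ : ℝ → ℝ) (hΦ : ContDiff ℝ 3 Φ)
    (I : Set ℝ) (hI : I.OrdConnected) (rs : ℝ) (hrs : rs ∈ I)
    (hturn :
      ((∀ r ∈ I, r < rs → 0 < iteratedDeriv 3 Φ r) ∧
       (∀ r ∈ I, rs < r → iteratedDeriv 3 Φ r < 0)) ∨
      ((∀ r ∈ I, r < rs → iteratedDeriv 3 Φ r < 0) ∧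
       (∀ r ∈ I, rs < r → 0 < iteratedDeriv 3 Φ r)))
    (a b a' b' : ℝ) (ha : a ∈ I) (hb : b ∈ I) (ha' : a' ∈ I) (hb' : b' ∈ I)
    (hab : a ≠ b) (hab' : a' ≠ b')
    (hJ : consJ Φ a b = 0) (hJ' : consJ Φ a' b' = 0)
    (haa' : a < a') :
    b > b' := by
  rcases hturn with ⟨hp, hn⟩ | ⟨hn, hp⟩
  · exact key hΦ hI
      (fun r hr h => by have := hp r hr h; rwa [d3_eq Φ] at this)
      (fun r hr h => by have := hn r hr h; rwa [d3_eq Φ] at this)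
      ha hb ha' hb' hab hab' hJ hJ' haa'
  · have hΨ : ContDiff ℝ 3 (fun t => -(Φ t)) := hΦ.neg
    have hJΨ : consJ (fun t => -(Φ t)) a b = 0 := by rw [consJ_neg, hJ, neg_zero]
    have hJΨ' : consJ (fun t => -(Φ t)) a' b' = 0 := by rw [consJ_neg, hJ', neg_zero]
    have hd3 : ∀ r, deriv (deriv (deriv (fun t => -(Φ t)))) r = - iteratedDeriv 3 Φ r := by
      intro r
      rw [← d3_eq, iteratedDeriv_fun_neg]
    exact key hΨ hI
      (fun r hr h => by rw [hd3 r]; have := hn r hr h; linarith)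
      (fun r hr h => by rw [hd3 r]; have := hp r hr h; linarith)
      ha hb ha' hb' hab hab' hJΨ hJΨ' haa'
end

section
/- Let Φ : ℝ → ℝ be twice continuously differentiable and let (a,b) with a ≠ b satisfy J(a,b) = 0 and σ(a,b) ≠ Φ''(b). Then there exist ε > 0 and a differentiable function R : (a − ε, a + ε) → ℝ with R(a) = b, J(r, R(r)) = 0 for all r ∈ (a − ε, a + ε), and derivative R'(a) = −(σ(a,b) − Φ''(a))/(σ(a,b) − Φ''(b)). In particular R'(a) = 0 if and only if σ(a,b) = Φ''(a). -/
/-- Rankine–Hugoniot (secant) slope `σ(a,b) = (Φ'(a) − Φ'(b))/(a − b)`. -/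
noncomputable def rhSlope (Φ : ℝ → ℝ) (a b : ℝ) : ℝ :=
  (deriv Φ a - deriv Φ b) / (a - b)

/-- The shear linear equivalence `(x, y) ↦ (x, p x + q y)` for `q ≠ 0`. -/
noncomputable def shearEquiv (p q : ℝ) (hq : q ≠ 0) : (ℝ × ℝ) ≃L[ℝ] ℝ × ℝ :=
  LinearEquiv.toContinuousLinearEquiv
  { toFun := fun x => (x.1, p * x.1 + q * x.2)
    invFun := fun y => (y.1, (y.2 - p * y.1) / q)
    map_add' := fun x y => by simp [Prod.ext_iff]; ring
    map_smul' := fun c x => by simp [Prod.ext_iff, smul_eq_mul]; ring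
    left_inv := fun x => by field_simp; refine Prod.ext rfl ?_; dsimp only; rw [add_sub_cancel_left, mul_div_cancel_left₀ _ hq]
    right_inv := fun y => by simp [Prod.ext_iff]; field_simp; ring }

lemma shearEquiv_apply (p q : ℝ) (hq : q ≠ 0) (x : ℝ × ℝ) :
    shearEquiv p q hq x = (x.1, p * x.1 + q * x.2) := rfl

lemma shearEquiv_symm_apply (p q : ℝ) (hq : q ≠ 0) (y : ℝ × ℝ) :
    (shearEquiv p q hq).symm y = (y.1, (y.2 - p * y.1) / q) := rfl

theorem stmt9 (Φ : ℝ → ℝ) (hΦ : ContDiff ℝ 2 Φ) (a b : ℝ) (hab : a ≠ b)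
    (hJ : consJ Φ a b = 0)
    (hnd : rhSlope Φ a b ≠ iteratedDeriv 2 Φ b) :
    ∃ ε > 0, ∃ R : ℝ → ℝ, R a = b ∧
      DifferentiableOn ℝ R (Set.Ioo (a - ε) (a + ε)) ∧
      (∀ r ∈ Set.Ioo (a - ε) (a + ε), consJ Φ r (R r) = 0) ∧
      HasDerivAt R
        (-((rhSlope Φ a b - iteratedDeriv 2 Φ a) /
           (rhSlope Φ a b - iteratedDeriv 2 Φ b))) a := by
  have hΦ1 : ContDiff ℝ 1 Φ := hΦ.of_le one_le_two
  have hΦ2 : ContDiff ℝ ((1 : ℕ) + 1) Φ := by exact_mod_cast hΦ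
  have hd1C : ContDiff ℝ 1 (deriv Φ) := by
    have := (contDiff_succ_iff_deriv.mp hΦ2).2.2
    exact_mod_cast this
  have hΦdiff : Differentiable ℝ Φ := hΦ1.differentiable one_ne_zero
  have hd1diff : Differentiable ℝ (deriv Φ) := hd1C.differentiable one_ne_zero
  set d1 : ℝ → ℝ := deriv Φ with hd1def
  set d2 : ℝ → ℝ := deriv (deriv Φ) with hd2def
  have hiter : ∀ x, iteratedDeriv 2 Φ x = d2 x := by
    intro x
    rw [show (2:ℕ) = 1 + 1 from rfl, iteratedDeriv_succ, iteratedDeriv_one]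
  have hane : a - b ≠ 0 := sub_ne_zero.mpr hab
  set σ : ℝ := rhSlope Φ a b with hσdef
  set pa : ℝ := (d1 a - d1 b) / 2 - ((a - b) / 2) * d2 a with hpadef
  set qb : ℝ := (d1 a - d1 b) / 2 - ((a - b) / 2) * d2 b with hqbdef
  have hσab : σ * (a - b) = d1 a - d1 b := by
    rw [hσdef, rhSlope]; field_simp; rfl
  have hpa : pa = ((a - b) / 2) * (σ - d2 a) := by
    rw [hpadef, ← hσab]; ring
  have hqb : qb = ((a - b) / 2) * (σ - d2 b) := by
    rw [hqbdef, ← hσab]; ring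
  have hσb : σ - d2 b ≠ 0 := by
    rw [sub_ne_zero, ← hiter b]; exact hnd
  have hq : qb ≠ 0 := by
    rw [hqb]; exact mul_ne_zero (by simpa using hane) hσb
  -- the function `F` and the map `ψ`
  set F : ℝ × ℝ → ℝ :=
    fun x => Φ x.1 - Φ x.2 - ((x.1 - x.2) / 2) * (d1 x.1 + d1 x.2) with hFdef
  have hFcons : ∀ x : ℝ × ℝ, F x = consJ Φ x.1 x.2 := fun x => rfl
  set ψ : ℝ × ℝ → ℝ × ℝ := fun x => (x.1, F x) with hψdef
  have hFC : ContDiff ℝ 1 F :=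
    ((hΦ1.comp contDiff_fst).sub (hΦ1.comp contDiff_snd)).sub
      (((contDiff_fst.sub contDiff_snd).div_const 2).mul
        ((hd1C.comp contDiff_fst).add (hd1C.comp contDiff_snd)))
  have hψC : ContDiff ℝ 1 ψ := contDiff_fst.prodMk hFC
  -- derivative of `F` at `(a, b)`
  set fstL : ℝ × ℝ →L[ℝ] ℝ := ContinuousLinearMap.fst ℝ ℝ ℝ with hfstL
  set sndL : ℝ × ℝ →L[ℝ] ℝ := ContinuousLinearMap.snd ℝ ℝ ℝ with hsndL
  have h1 : HasFDerivAt (fun x : ℝ × ℝ => Φ x.1) (d1 a • fstL) (a, b) :=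
    (hΦdiff a).hasDerivAt.comp_hasFDerivAt _ hasFDerivAt_fst
  have h2 : HasFDerivAt (fun x : ℝ × ℝ => Φ x.2) (d1 b • sndL) (a, b) :=
    (hΦdiff b).hasDerivAt.comp_hasFDerivAt _ hasFDerivAt_snd
  have h3 : HasFDerivAt (fun x : ℝ × ℝ => d1 x.1) (d2 a • fstL) (a, b) :=
    by have := (hd1diff a).hasDerivAt.comp_hasFDerivAt (a, b) (hasFDerivAt_fst (𝕜 := ℝ) (E := ℝ) (F := ℝ)); exact this
  have h4 : HasFDerivAt (fun x : ℝ × ℝ => d1 x.2) (d2 b • sndL) (a, b) :=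
    by have := (hd1diff b).hasDerivAt.comp_hasFDerivAt (a, b) (hasFDerivAt_snd (𝕜 := ℝ) (E := ℝ) (F := ℝ)); exact this
  have h5 : HasFDerivAt (fun x : ℝ × ℝ => (x.1 - x.2) / 2)
      ((2:ℝ)⁻¹ • (fstL - sndL)) (a, b) := by
    have heq : (fun x : ℝ × ℝ => (x.1 - x.2) / 2) = fun x => ((2:ℝ)⁻¹ • (fstL - sndL)) x := by
      funext x
      simp [hfstL, hsndL, div_eq_inv_mul, mul_comm]
    rw [heq]
    exact ((2:ℝ)⁻¹ • (fstL - sndL)).hasFDerivAt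
  have hF' : HasFDerivAt F
      ((d1 a • fstL - d1 b • sndL) -
        (((a - b) / 2) • (d2 a • fstL + d2 b • sndL) +
          (d1 a + d1 b) • ((2:ℝ)⁻¹ • (fstL - sndL)))) (a, b) :=
    (h1.sub h2).sub (h5.mul (h3.add h4))
  have hψd : HasFDerivAt ψ (↑(shearEquiv pa qb hq) : ℝ × ℝ →L[ℝ] ℝ × ℝ) (a, b) := by
    have h := hasFDerivAt_fst.prodMk hF'
    have heq : (ContinuousLinearMap.fst ℝ ℝ ℝ).prod
        ((d1 a • fstL - d1 b • sndL) -
          (((a - b) / 2) • (d2 a • fstL + d2 b • sndL) +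
            (d1 a + d1 b) • ((2:ℝ)⁻¹ • (fstL - sndL)))) =
        (↑(shearEquiv pa qb hq) : ℝ × ℝ →L[ℝ] ℝ × ℝ) := by
      apply ContinuousLinearMap.ext
      intro x
      simp [shearEquiv_apply, hfstL, hsndL, hpadef, hqbdef, Prod.ext_iff,
        ContinuousLinearMap.prod_apply, smul_eq_mul]
      ring
    rw [heq] at h
    exact h
  have hψa : ψ (a, b) = (a, 0) := by
    have : F (a, b) = 0 := by rw [hFcons]; exact hJ
    simp [hψdef, this]
  have hψCat : ContDiffAt ℝ 1 ψ (a, b) := hψC.contDiffAt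
  have hstrict : HasStrictFDerivAt ψ (↑(shearEquiv pa qb hq) : ℝ × ℝ →L[ℝ] ℝ × ℝ) (a, b) :=
    hψCat.hasStrictFDerivAt' hψd one_ne_zero
  set g : ℝ × ℝ → ℝ × ℝ := hψCat.localInverse hψd one_ne_zero with hgdef
  have hga : g (a, 0) = (a, b) := by
    rw [← hψa]
    exact hψCat.localInverse_apply_image hψd one_ne_zero
  have hgC : ContDiffAt ℝ 1 g (a, 0) := hψa ▸ hψCat.to_localInverse hψd one_ne_zero
  have hgd : HasStrictFDerivAt g
      (↑(shearEquiv pa qb hq).symm : ℝ × ℝ →L[ℝ] ℝ × ℝ) (a, 0) :=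
    hψa ▸ hstrict.to_localInverse
  have hginv : ∀ᶠ y in nhds (a, 0), ψ (g y) = y := hψa ▸ hstrict.eventually_right_inverse
  -- differentiability on a neighborhood
  obtain ⟨u, huo, hxu, hgu⟩ := hgC.contDiffOn' le_rfl (by simp)
  rw [Set.insert_eq_of_mem (Set.mem_univ _), Set.univ_inter] at hgu
  -- combine neighborhoods and pull back along `r ↦ (r, 0)`
  have hι : Continuous (fun r : ℝ => ((r, 0) : ℝ × ℝ)) := by fun_prop
  have hs : (fun r : ℝ => ((r, 0) : ℝ × ℝ)) ⁻¹'
      (u ∩ {y | ψ (g y) = y}) ∈ nhds a := by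
    exact hι.continuousAt.preimage_mem_nhds (Filter.inter_mem (huo.mem_nhds hxu) hginv)
  obtain ⟨ε, hε, hball⟩ := Metric.mem_nhds_iff.mp hs
  refine ⟨ε, hε, fun r => (g (r, 0)).2, ?_, ?_, ?_, ?_⟩
  · show (g (a, 0)).2 = b
    rw [hga]
  · -- differentiability on the interval
    have hsub : Set.Ioo (a - ε) (a + ε) ⊆
        (fun r : ℝ => ((r, 0) : ℝ × ℝ)) ⁻¹' (u ∩ {y | ψ (g y) = y}) := by
      rw [← Real.ball_eq_Ioo]; exact hball
    have hgdiff : DifferentiableOn ℝ g u := hgu.differentiableOn one_ne_zero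
    have : DifferentiableOn ℝ (fun r : ℝ => g (r, 0)) (Set.Ioo (a - ε) (a + ε)) := by
      apply hgdiff.comp
      · exact ((differentiable_id.prodMk (differentiable_const 0)).differentiableOn)
      · intro r hr
        exact (hsub hr).1
    exact this.snd
  · intro r hr
    have hr' : ((r, 0) : ℝ × ℝ) ∈ u ∩ {y | ψ (g y) = y} := by
      rw [← Real.ball_eq_Ioo] at hr
      exact hball hr
    have h1 : ψ (g (r, 0)) = (r, 0) := hr'.2
    have hfst : (g (r, 0)).1 = r := congrArg Prod.fst h1
    have hsnd : F (g (r, 0)) = 0 := congrArg Prod.snd h1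
    rw [hFcons, hfst] at hsnd
    exact hsnd
  · -- derivative at `a`
    have hι' : HasDerivAt (fun r : ℝ => ((r, 0) : ℝ × ℝ)) (1, 0) a :=
      (hasDerivAt_id a).prodMk (hasDerivAt_const a 0)
    have hcomp : HasDerivAt (fun r : ℝ => g (r, 0))
        ((shearEquiv pa qb hq).symm (1, 0)) a :=
      by have := (hgd.hasFDerivAt).comp_hasDerivAt a hι'; exact this
    have hsnd : HasDerivAt (fun r : ℝ => (g (r, 0)).2)
        (((shearEquiv pa qb hq).symm (1, 0)).2) a := hcomp.snd
    have hval : ((shearEquiv pa qb hq).symm (1, 0)).2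
        = -((σ - d2 a) / (σ - d2 b)) := by
      rw [shearEquiv_symm_apply]
      show (0 - pa * 1) / qb = -((σ - d2 a) / (σ - d2 b))
      rw [hpa, hqb]
      field_simp
      ring
    rw [hval] at hsnd
    have : -((rhSlope Φ a b - iteratedDeriv 2 Φ a) /
        (rhSlope Φ a b - iteratedDeriv 2 Φ b)) = -((σ - d2 a) / (σ - d2 b)) := by
      rw [hiter a, hiter b]
    rw [this]
    exact hsnd
end

section
/- Let Φ : ℝ → ℝ be twice continuously differentiable and let (a,b) with a ≠ b be a stationary point of J, i.e. both partial derivatives ∂₁J(a,b) and ∂₂J(a,b) vanish. Then the graph of Φ' is tangent to the secant line at both endpoints: Φ''(a) = σ(a,b) and Φ''(b) = σ(a,b); in particular Φ''(a) = Φ''(b). -/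
theorem stmt10 (Φ : ℝ → ℝ) (hΦ : ContDiff ℝ 2 Φ) (a b : ℝ) (hab : a ≠ b)
    (h1 : deriv (fun x => consJ Φ x b) a = 0)
    (h2 : deriv (fun y => consJ Φ a y) b = 0) :
    iteratedDeriv 2 Φ a = rhSlope Φ a b ∧
    iteratedDeriv 2 Φ b = rhSlope Φ a b ∧
    iteratedDeriv 2 Φ a = iteratedDeriv 2 Φ b := by
  have hΦ1 : Differentiable ℝ Φ := hΦ.differentiable (by norm_num)
  have hΦ2 : Differentiable ℝ (deriv Φ) :=
    (hΦ.iterate_deriv' 1 1).differentiable (by norm_num)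
  have hit : iteratedDeriv 2 Φ = deriv (deriv Φ) := by
    rw [iteratedDeriv_succ, iteratedDeriv_one]
  have key1 : HasDerivAt (fun x => consJ Φ x b)
      (deriv Φ a - (2⁻¹ * (deriv Φ a + deriv Φ b)
        + ((a - b) / 2) * deriv (deriv Φ) a)) a := by
    have h1 : HasDerivAt Φ (deriv Φ a) a := (hΦ1 a).hasDerivAt
    have h2 : HasDerivAt (deriv Φ) (deriv (deriv Φ) a) a := (hΦ2 a).hasDerivAt
    have := ((((hasDerivAt_id a).sub_const b).div_const 2).mul
      ((h2.add_const (deriv Φ b))))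
    exact ((h1.sub_const (Φ b)).sub this).congr_deriv (by simp only [id_eq, Pi.add_apply]; ring)
  have key2 : HasDerivAt (fun y => consJ Φ a y)
      (-(deriv Φ b) - ((-1 * (deriv Φ a + deriv Φ b)) / 2
        + ((a - b) / 2) * deriv (deriv Φ) b)) b := by
    have h1 : HasDerivAt Φ (deriv Φ b) b := (hΦ1 b).hasDerivAt
    have h2 : HasDerivAt (deriv Φ) (deriv (deriv Φ) b) b := (hΦ2 b).hasDerivAt
    have hc : HasDerivAt (fun y : ℝ => (a - y) / 2) (-1 / 2) b := by
      simpa using (((hasDerivAt_id b).const_sub a).div_const 2)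
    have := hc.mul ((hasDerivAt_const b (deriv Φ a)).add h2)
    have := ((hasDerivAt_const b (Φ a)).sub h1).sub this
    exact this.congr_deriv (by simp only [id_eq, Pi.add_apply]; ring)
  rw [key1.deriv] at h1
  rw [key2.deriv] at h2
  have hne : a - b ≠ 0 := sub_ne_zero.mpr hab
  have ea : deriv (deriv Φ) a = rhSlope Φ a b := by
    rw [rhSlope]; field_simp; linarith
  have eb : deriv (deriv Φ) b = rhSlope Φ a b := by
    rw [rhSlope]; field_simp; linarith
  rw [hit]
  exact ⟨ea, eb, ea.trans eb.symm⟩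
end

section
/- Let Φ : ℝ → ℝ be a quartic polynomial Φ(r) = c₄r⁴ + c₃r³ + c₂r² + c₁r + c₀ with c₄ ≠ 0, and let r* = −c₃/(4c₄) be the unique zero of Φ'''. Then for all real a ≠ b: J(a,b) = 0 if and only if a + b = 2r*. In particular, for quartic potentials (classical FPU chains) all off-diagonal conservative shock data lie on the antidiagonal through the turning point. -/
theorem stmt14 (c4 c3 c2 c1 c0 : ℝ) (hc4 : c4 ≠ 0) (Φ : ℝ → ℝ)
    (hΦ : Φ = fun r => c4 * r ^ 4 + c3 * r ^ 3 + c2 * r ^ 2 + c1 * r + c0) :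
    ∀ a b : ℝ, a ≠ b → (consJ Φ a b = 0 ↔ a + b = 2 * (-c3 / (4 * c4))) := by
  have hd : ∀ r : ℝ, deriv Φ r = 4 * c4 * r ^ 3 + 3 * c3 * r ^ 2 + 2 * c2 * r + c1 := by
    intro r
    have h : HasDerivAt Φ (4 * c4 * r ^ 3 + 3 * c3 * r ^ 2 + 2 * c2 * r + c1) r := by
      subst hΦ
      have := ((((hasDerivAt_pow 4 r).const_mul c4).add
        ((hasDerivAt_pow 3 r).const_mul c3)).add
        ((hasDerivAt_pow 2 r).const_mul c2)).add
        (((hasDerivAt_id r).const_mul c1).add (hasDerivAt_const r c0))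
      convert this using 1
      · rfl
      · rfl
      · funext x; simp [id]; ring
      · norm_num; ring
    exact h.deriv
  intro a b hab
  have key : consJ Φ a b = -(a - b) ^ 3 / 2 * (2 * c4 * (a + b) + c3) := by
    simp only [consJ]
    rw [hd a, hd b]
    simp only [hΦ]
    ring
  rw [key]
  have hab3 : -(a - b) ^ 3 / 2 ≠ 0 := by
    have := sub_ne_zero.mpr hab
    simp [pow_eq_zero_iff, this]
  constructor
  · intro h
    have h2 : 2 * c4 * (a + b) + c3 = 0 := by
      rcases mul_eq_zero.mp h with h1 | h1
      · exact absurd h1 hab3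
      · exact h1
    field_simp
    linarith
  · intro h
    have : 2 * c4 * (a + b) + c3 = 0 := by
      rw [h]; field_simp; ring
    rw [this, mul_zero]
end

section
/- Let Φ : ℝ → ℝ be three times continuously differentiable with convex–concave flux on an interval I: there is r* ∈ I with Φ'''(r) > 0 for all r ∈ I with r < r* and Φ'''(r) < 0 for all r ∈ I with r > r*. Then every off-diagonal conservative shock with data in I is supersonic: if a, b ∈ I, a ≠ b and J(a,b) = 0, then σ(a,b) > Φ''(a) and σ(a,b) > Φ''(b). -/
open Set

private lemma mvtA {g : ℝ → ℝ} (hg : Differentiable ℝ g)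
    {p q : ℝ} (hanti : StrictAntiOn (deriv g) (Icc p q))
    (hp : 0 ≤ g p) (hq : 0 ≤ g q) : ∀ x ∈ Ioo p q, 0 < g x := by
  intro x hx
  by_contra hle
  push_neg at hle
  obtain ⟨c, hc, hceq⟩ := exists_deriv_eq_slope g hx.1 hg.continuous.continuousOn
    hg.differentiableOn
  obtain ⟨d, hd, hdeq⟩ := exists_deriv_eq_slope g hx.2 hg.continuous.continuousOn
    hg.differentiableOn
  have hc0 : deriv g c ≤ 0 := by
    rw [hceq]
    apply div_nonpos_of_nonpos_of_nonneg <;> linarith [hx.1]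
  have hd0 : 0 ≤ deriv g d := by
    rw [hdeq]
    apply div_nonneg <;> linarith [hx.2]
  have : deriv g d < deriv g c :=
    hanti ⟨hc.1.le, hc.2.le.trans hx.2.le⟩ ⟨hx.1.le.trans hd.1.le, hd.2.le⟩ (hc.2.trans hd.1)
  linarith

private lemma mvtB {g : ℝ → ℝ} (hg : Differentiable ℝ g)
    {p q : ℝ} (hmono : StrictMonoOn (deriv g) (Icc p q))
    (hp : g p ≤ 0) (hq : g q ≤ 0) : ∀ x ∈ Ioo p q, g x < 0 := by
  intro x hx
  have hanti : StrictAntiOn (deriv (fun y => -g y)) (Icc p q) := by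
    intro u hu v hv huv
    have hu' : deriv (fun y => -g y) u = -deriv g u := by
      simp [deriv.neg]
    have hv' : deriv (fun y => -g y) v = -deriv g v := by
      simp [deriv.neg]
    rw [hu', hv']
    exact neg_lt_neg (hmono hu hv huv)
  have := mvtA hg.neg hanti (by simpa using hp) (by simpa using hq) x hx
  simpa using this

private lemma key_s17 (Φ : ℝ → ℝ) (hΦ : ContDiff ℝ 3 Φ)
    (I : Set ℝ) (hI : I.OrdConnected) (rs : ℝ)
    (h1 : ∀ r ∈ I, r < rs → 0 < iteratedDeriv 3 Φ r)
    (h2 : ∀ r ∈ I, rs < r → iteratedDeriv 3 Φ r < 0)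
    (a b : ℝ) (ha : a ∈ I) (hb : b ∈ I) (hba : b < a) (hJ : consJ Φ a b = 0) :
    iteratedDeriv 2 Φ a < rhSlope Φ a b ∧ iteratedDeriv 2 Φ b < rhSlope Φ a b := by
  have hsub : Icc b a ⊆ I := hI.out hb ha
  -- smoothness
  have hA : ContDiff ℝ 2 (deriv Φ) :=
    ((contDiff_succ_iff_deriv (n := 2)).mp (by exact_mod_cast hΦ)).2.2
  have hB : ContDiff ℝ 1 (deriv (deriv Φ)) :=
    ((contDiff_succ_iff_deriv (n := 1)).mp (by exact_mod_cast hA)).2.2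
  have hdΦ : Differentiable ℝ Φ := hΦ.differentiable (by norm_num)
  have hd2 : Differentiable ℝ (deriv Φ) := hA.differentiable (by norm_num)
  have hd3 : Differentiable ℝ (deriv (deriv Φ)) := hB.differentiable (by norm_num)
  have hit2 : iteratedDeriv 2 Φ = deriv (deriv Φ) := by
    rw [show (2:ℕ) = 1+1 from rfl, iteratedDeriv_succ, iteratedDeriv_one]
  have hit3 : iteratedDeriv 3 Φ = deriv (deriv (deriv Φ)) := by
    rw [show (3:ℕ) = 2+1 from rfl, iteratedDeriv_succ, hit2]
  set σ := rhSlope Φ a b with hσ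
  have hab' : a - b ≠ 0 := sub_ne_zero.2 hba.ne'
  have hkey : σ * (a - b) = deriv Φ a - deriv Φ b := by
    rw [hσ, rhSlope]; field_simp
  set g : ℝ → ℝ := fun x => deriv Φ x - deriv Φ b - σ * (x - b) with hgdef
  set G : ℝ → ℝ := fun x => Φ x - Φ b - deriv Φ b * (x - b) - σ * (x - b)^2 / 2 with hGdef
  have hga : g a = 0 := by
    rw [hgdef]; simp only; linarith [hkey]
  have hgb : g b = 0 := by rw [hgdef]; simp
  have hGb : G b = 0 := by rw [hGdef]; simp
  have hGa : G a = 0 := by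
    simp only [consJ] at hJ
    rw [hGdef]; simp only
    linear_combination hJ - (a - b)/2 * hkey
  have hgd : ∀ x, HasDerivAt g (deriv (deriv Φ) x - σ) x := by
    intro x
    have h1' : HasDerivAt (fun x => deriv Φ x - deriv Φ b) (deriv (deriv Φ) x) x :=
      ((hd2 x).hasDerivAt).sub_const _
    have h2' : HasDerivAt (fun x => σ * (x - b)) (σ * 1) x :=
      ((hasDerivAt_id x).sub_const b).const_mul σ
    rw [hgdef]
    simpa using h1'.fun_sub h2'
  have hgdiff : Differentiable ℝ g := fun x => (hgd x).differentiableAt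
  have hgderiv : ∀ x, deriv g x = deriv (deriv Φ) x - σ := fun x => (hgd x).deriv
  have hgdcont : ContinuousOn (deriv g) (Icc b a) := by
    have : Continuous fun x => deriv (deriv Φ) x - σ := hd3.continuous.sub continuous_const
    exact (this.congr (fun x => (hgderiv x).symm) : Continuous (deriv g)).continuousOn
  have hGd : ∀ x, HasDerivAt G (g x) x := by
    intro x
    have h1' : HasDerivAt (fun x => Φ x - Φ b - deriv Φ b * (x - b))
        (deriv Φ x - deriv Φ b * 1) x :=
      (((hdΦ x).hasDerivAt).sub_const (Φ b)).sub
        (((hasDerivAt_id x).sub_const b).const_mul _)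
    have h3' : HasDerivAt (fun x => σ * (x - b)^2 / 2) (σ * (2 * (x - b)) / 2) x := by
      have hp : HasDerivAt (fun x => (x - b)^2) (2 * (x - b)) x := by
        simpa using ((hasDerivAt_id x).sub_const b).fun_pow 2
      exact (hp.const_mul σ).div_const 2
    have := h1'.fun_sub h3'
    rw [hgdef, hGdef]
    refine this.congr_deriv ?_
    ring
  have hGdiff : Differentiable ℝ G := fun x => (hGd x).differentiableAt
  have hd2g : ∀ x, deriv (deriv g) x = iteratedDeriv 3 Φ x := by
    intro x
    have : deriv g = fun x => deriv (deriv Φ) x - σ := funext hgderiv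
    rw [this, deriv_sub_const, hit3]
  -- strict monotonicity helpers for deriv g
  have anti_on : ∀ p q : ℝ, b ≤ p → q ≤ a → (∀ x ∈ Ioo p q, rs < x) →
      StrictAntiOn (deriv g) (Icc p q) := by
    intro p q hp hq hmid
    apply strictAntiOn_of_deriv_neg (convex_Icc p q)
      (hgdcont.mono (Icc_subset_Icc hp hq))
    intro x hx
    rw [interior_Icc] at hx
    rw [hd2g]
    exact h2 x (hsub ⟨hp.trans hx.1.le, hx.2.le.trans hq⟩) (hmid x hx)
  have mono_on : ∀ p q : ℝ, b ≤ p → q ≤ a → (∀ x ∈ Ioo p q, x < rs) →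
      StrictMonoOn (deriv g) (Icc p q) := by
    intro p q hp hq hmid
    apply strictMonoOn_of_deriv_pos (convex_Icc p q)
      (hgdcont.mono (Icc_subset_Icc hp hq))
    intro x hx
    rw [interior_Icc] at hx
    rw [hd2g]
    exact h1 x (hsub ⟨hp.trans hx.1.le, hx.2.le.trans hq⟩) (hmid x hx)
  -- contradictions from sign of g on (b,a)
  have Gmono : (∀ x ∈ Ioo b a, 0 < g x) → False := by
    intro hpos
    have hm : StrictMonoOn G (Icc b a) := by
      apply strictMonoOn_of_deriv_pos (convex_Icc b a) hGdiff.continuous.continuousOn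
      intro x hx
      rw [interior_Icc] at hx
      rw [(hGd x).deriv]
      exact hpos x hx
    have := hm (left_mem_Icc.2 hba.le) (right_mem_Icc.2 hba.le) hba
    rw [hGb, hGa] at this
    exact lt_irrefl 0 this
  have Ganti : (∀ x ∈ Ioo b a, g x < 0) → False := by
    intro hneg
    have hm : StrictAntiOn G (Icc b a) := by
      apply strictAntiOn_of_deriv_neg (convex_Icc b a) hGdiff.continuous.continuousOn
      intro x hx
      rw [interior_Icc] at hx
      rw [(hGd x).deriv]
      exact hneg x hx
    have := hm (left_mem_Icc.2 hba.le) (right_mem_Icc.2 hba.le) hba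
    rw [hGb, hGa] at this
    exact lt_irrefl 0 this
  -- Step A : b < rs
  have hbrs : b < rs := by
    by_contra h
    push_neg at h
    have hanti : StrictAntiOn (deriv g) (Icc b a) :=
      anti_on b a le_rfl le_rfl (fun x hx => lt_of_le_of_lt h hx.1)
    exact Gmono (mvtA hgdiff hanti hgb.ge hga.ge)
  -- Step B : rs < a
  have hrsa : rs < a := by
    by_contra h
    push_neg at h
    have hmono : StrictMonoOn (deriv g) (Icc b a) :=
      mono_on b a le_rfl le_rfl (fun x hx => lt_of_lt_of_le hx.2 h)
    exact Ganti (mvtB hgdiff hmono hgb.le hga.le)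
  have hmono1 : StrictMonoOn (deriv g) (Icc b rs) :=
    mono_on b rs le_rfl hrsa.le (fun x hx => hx.2)
  have hanti2 : StrictAntiOn (deriv g) (Icc rs a) :=
    anti_on rs a hbrs.le le_rfl (fun x hx => hx.1)
  -- Step C : deriv g b < 0
  have hCb : deriv g b < 0 := by
    by_contra h
    push_neg at h
    have hgm : StrictMonoOn g (Icc b rs) := by
      apply strictMonoOn_of_deriv_pos (convex_Icc b rs) hgdiff.continuous.continuousOn
      intro x hx
      rw [interior_Icc] at hx
      have := hmono1 (left_mem_Icc.2 hbrs.le) ⟨hx.1.le, hx.2.le⟩ hx.1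
      linarith
    have hgrs : 0 < g rs := by
      have := hgm (left_mem_Icc.2 hbrs.le) (right_mem_Icc.2 hbrs.le) hbrs
      rw [hgb] at this; exact this
    have hpos2 := mvtA hgdiff hanti2 hgrs.le hga.ge
    apply Gmono
    intro x hx
    rcases lt_trichotomy x rs with h' | h' | h'
    · have := hgm (left_mem_Icc.2 hbrs.le) ⟨hx.1.le, h'.le⟩ hx.1
      rw [hgb] at this; exact this
    · rw [h']; exact hgrs
    · exact hpos2 x ⟨h', hx.2⟩
  -- Step D : deriv g a < 0
  have hCa : deriv g a < 0 := by
    by_contra h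
    push_neg at h
    have hgm : StrictMonoOn g (Icc rs a) := by
      apply strictMonoOn_of_deriv_pos (convex_Icc rs a) hgdiff.continuous.continuousOn
      intro x hx
      rw [interior_Icc] at hx
      have := hanti2 ⟨hx.1.le, hx.2.le⟩ (right_mem_Icc.2 hrsa.le) hx.2
      linarith
    have hgrs : g rs < 0 := by
      have := hgm (left_mem_Icc.2 hrsa.le) (right_mem_Icc.2 hrsa.le) hrsa
      rw [hga] at this; linarith
    have hneg1 := mvtB hgdiff hmono1 hgb.le hgrs.le
    apply Ganti
    intro x hx
    rcases lt_trichotomy x rs with h' | h' | h'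
    · exact hneg1 x ⟨hx.1, h'⟩
    · rw [h']; exact hgrs
    · have := hgm ⟨h'.le, hx.2.le⟩ (right_mem_Icc.2 hrsa.le) hx.2
      rw [hga] at this; linarith
  constructor
  · rw [hit2]
    have := hgderiv a
    linarith [hCa, (hgderiv a) ▸ hCa]
  · rw [hit2]
    linarith [hCb, (hgderiv b) ▸ hCb]

theorem stmt17 (Φ : ℝ → ℝ) (hΦ : ContDiff ℝ 3 Φ)
    (I : Set ℝ) (hI : I.OrdConnected) (rs : ℝ) (hrs : rs ∈ I)
    (h1 : ∀ r ∈ I, r < rs → 0 < iteratedDeriv 3 Φ r)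
    (h2 : ∀ r ∈ I, rs < r → iteratedDeriv 3 Φ r < 0)
    (a b : ℝ) (ha : a ∈ I) (hb : b ∈ I) (hab : a ≠ b) (hJ : consJ Φ a b = 0) :
    iteratedDeriv 2 Φ a < rhSlope Φ a b ∧ iteratedDeriv 2 Φ b < rhSlope Φ a b := by
  rcases lt_or_gt_of_ne hab with h | h
  · -- a < b : apply key with roles swapped
    have hJ' : consJ Φ b a = 0 := by
      simp only [consJ] at hJ ⊢; linarith
    have hsl : rhSlope Φ b a = rhSlope Φ a b := by
      simp only [rhSlope]
      rw [← neg_div_neg_eq]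
      ring_nf
    have := key_s17 Φ hΦ I hI rs h1 h2 b a hb ha h hJ'
    rw [hsl] at this
    exact ⟨this.2, this.1⟩
  · exact key_s17 Φ hΦ I hI rs h1 h2 a b ha hb h hJ
end
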